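/- Let V be a vector space over ℝ and let A, B : V →ₗ[ℝ] V be linear operators such that id − A is injective. Let u, u', w, f ∈ V satisfy the factored equation (id − A) ((id − B) u') = (id + A) ((id + B) u) + 2 • f, and suppose w satisfies the first split equation (id − A) w = (id + B) u + f. Then the second split equation holds: (id − B) u' = (id + A) w + f. -/
import Mathlib


/-- Converse direction: the factored equation together with the first split step
determines the second split step, provided `id − A` is injective. -/
theorem adi_factored_implies_second_split
    {V : Type*} [AddCommGroup V] [Module ℝ V]
    (A B : V →ₗ[ℝ] V)
    (hA : Function.Injective (LinearMap.id - A : _ →ₗ[ℝ] _))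
    (u u' w f : V)
    (hfac : (LinearMap.id - A : _ →ₗ[ℝ] _) ((LinearMap.id - B : _ →ₗ[ℝ] _) u') =
      (LinearMap.id + A : _ →ₗ[ℝ] _) ((LinearMap.id + B : _ →ₗ[ℝ] _) u) + (2 : ℝ) • f)
    (h1 : (LinearMap.id - A : _ →ₗ[ℝ] _) w = (LinearMap.id + B : _ →ₗ[ℝ] _) u + f) :
    (LinearMap.id - B : _ →ₗ[ℝ] _) u' = (LinearMap.id + A : _ →ₗ[ℝ] _) w + f := by
  apply hA
  simp only [LinearMap.sub_apply, LinearMap.add_apply, LinearMap.id_apply, map_add, map_sub,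
    two_smul] at *
  abel_nf
  abel_nf at hfac h1
  have hAw : A w = w - (u + B u + f) := by
    have := h1; linear_combination (norm := abel) -this
  rw [hfac, hAw]
  simp only [map_add, map_sub, map_smul, map_neg, smul_add, smul_sub, smul_neg]
  abel_nf
  rw [h1]
  abel
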